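/- arXiv:1203.1592 — 3 statements merged into one kernel-verified Lean document; each statement's English description precedes it below -/
import Mathlib

section
/- For every n ≥ 1 and every φ₀ > 0 there exists φ₁ > 0 with the following property: for every N and every φ₀-thick n-simplex σ in EuclideanSpace ℝ (Fin N), given by affinely independent vertices σ₀,…,σ_n, and every strictly increasing chain of nonempty index sets S₀ ⊊ S₁ ⊊ ⋯ ⊊ S_n = {0,…,n}, the points w_j := centroid of {σ_i : i ∈ S_j} (j = 0,…,n) are affinely independent, and the n-simplex with vertices w₀,…,w_n is φ₁-thick. (In particular every simplex of the first barycentric subdivision of a thick simplex is thick.) -/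
open Metric Finset

/-- The thickness (fatness) of the simplex with vertices `σ 0, …, σ n`:
the distance from the barycenter to the boundary (the union of the convex
hulls of the facets, i.e. of the sets of all vertices but one), divided by
the diameter of the simplex. -/
noncomputable def simplexThickness {E : Type*} [NormedAddCommGroup E]
    [InnerProductSpace ℝ E] {n : ℕ} (σ : Fin (n + 1) → E) : ℝ :=
  Metric.infDist ((Finset.univ : Finset (Fin (n + 1))).centroid ℝ σ)
      (⋃ i : Fin (n + 1), convexHull ℝ (σ '' {i}ᶜ)) /
    Metric.diam (convexHull ℝ (Set.range σ))

namespace BarySubAux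

variable {E : Type*} [NormedAddCommGroup E] [NormedSpace ℝ E] {n : ℕ}

/-- Linear combination of the vertices with given weights. -/
noncomputable def pt (σ : Fin (n + 1) → E) (u : Fin (n + 1) → ℝ) : E := ∑ i, u i • σ i

lemma sum_const_inv (n : ℕ) : ∑ _i : Fin (n + 1), ((n : ℝ) + 1)⁻¹ = 1 := by
  rw [Finset.sum_const, Finset.card_univ, Fintype.card_fin, nsmul_eq_mul]
  push_cast
  exact mul_inv_cancel₀ (by positivity)

lemma dist_pt (σ : Fin (n + 1) → E) (u₁ u₂ : Fin (n + 1) → ℝ) :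
    dist (pt σ u₁) (pt σ u₂) = ‖∑ i, (u₁ i - u₂ i) • σ i‖ := by
  rw [dist_eq_norm]
  congr 1
  simp [pt, sub_smul, Finset.sum_sub_distrib]

lemma centroid_eq_pt (τ : Fin (n + 1) → E) :
    Finset.univ.centroid ℝ τ = pt τ (fun _ => ((n : ℝ) + 1)⁻¹) := by
  rw [Finset.centroid_def, Finset.affineCombination_eq_linear_combination _ _ _
    (Finset.sum_centroidWeights_eq_one_of_nonempty ℝ _ ⟨0, Finset.mem_univ 0⟩)]
  simp only [pt, Finset.centroidWeights_apply, Finset.card_univ, Fintype.card_fin]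
  push_cast
  rfl

lemma centroid_finset_eq_pt (σ : Fin (n + 1) → E) (s : Finset (Fin (n + 1))) (hs : s.Nonempty) :
    s.centroid ℝ σ = pt σ (fun i => if i ∈ s then ((s.card : ℝ))⁻¹ else 0) := by
  rw [Finset.centroid_def, Finset.affineCombination_eq_linear_combination _ _ _
    (Finset.sum_centroidWeights_eq_one_of_nonempty ℝ _ hs)]
  simp only [pt, Finset.centroidWeights_apply, ite_smul, zero_smul]
  rw [Finset.sum_ite_mem, Finset.univ_inter]

lemma pt_mem_facet (τ : Fin (n + 1) → E) {u : Fin (n + 1) → ℝ} (h0 : ∀ i, 0 ≤ u i)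
    (h1 : ∑ i, u i = 1) {i₀ : Fin (n + 1)} (hi : u i₀ = 0) :
    pt τ u ∈ convexHull ℝ (τ '' ({i₀}ᶜ : Set (Fin (n + 1)))) := by
  have hsum : ∑ i ∈ Finset.univ.erase i₀, u i = 1 := by
    rw [Finset.sum_erase _ hi, h1]
  have hpt : pt τ u = (Finset.univ.erase i₀).centerMass u τ := by
    rw [Finset.centerMass_eq_of_sum_1 _ _ hsum, pt]
    rw [← Finset.sum_erase (Finset.univ) (f := fun i => u i • τ i) (a := i₀) (by simp [hi])]
  rw [hpt]
  refine Finset.centerMass_mem_convexHull _ (fun i _ => h0 i) (by rw [hsum]; norm_num) ?_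
  intro i hi'
  exact ⟨i, (Finset.mem_erase.mp hi').1, rfl⟩

lemma pt_mem_convexHull (σ : Fin (n + 1) → E) {u : Fin (n + 1) → ℝ} (h0 : ∀ i, 0 ≤ u i)
    (h1 : ∑ i, u i = 1) : pt σ u ∈ convexHull ℝ (Set.range σ) := by
  have hm := affineCombination_mem_convexHull (s := (Finset.univ : Finset (Fin (n + 1))))
    (v := σ) (w := u) (fun i _ => h0 i) h1
  rwa [Finset.affineCombination_eq_linear_combination _ _ _ h1] at hm

lemma far' (σ : Fin (n + 1) → E) {r : ℝ}
    (hrle : ∀ x ∈ ⋃ i, convexHull ℝ (σ '' ({i}ᶜ : Set (Fin (n + 1)))),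
      r ≤ dist (pt σ fun _ => ((n : ℝ) + 1)⁻¹) x)
    {u : Fin (n + 1) → ℝ} (h1 : ∑ i, u i = 1) {i₀ : Fin (n + 1)} (hneg : u i₀ ≤ 0) :
    r ≤ dist (pt σ fun _ => ((n : ℝ) + 1)⁻¹) (pt σ u) := by
  set a : ℝ := ((n : ℝ) + 1)⁻¹ with ha
  have ha0 : 0 < a := by rw [ha]; positivity
  by_cases hA : ∀ i, 0 ≤ u i
  · exact hrle _ (Set.mem_iUnion.2 ⟨i₀, pt_mem_facet σ hA h1 (le_antisymm hneg (hA i₀))⟩)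
  · push_neg at hA
    obtain ⟨i₁, hi₁⟩ := hA
    have hIne : (Finset.univ.filter (fun i => u i < 0)).Nonempty :=
      ⟨i₁, by simp [hi₁]⟩
    set t : ℝ := (Finset.univ.filter (fun i => u i < 0)).inf' hIne (fun i => a / (a - u i))
      with htdef
    obtain ⟨i₂, hi₂I, hi₂⟩ := Finset.exists_mem_eq_inf' hIne (fun i => a / (a - u i))
    have hden : ∀ i ∈ Finset.univ.filter (fun i => u i < 0), 0 < a - u i := by
      intro i hi
      have := (Finset.mem_filter.mp hi).2
      linarith
    have hneg2 : u i₂ < 0 := (Finset.mem_filter.mp hi₂I).2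
    have ht0 : 0 < t := by
      rw [← htdef] at hi₂
      rw [hi₂]
      exact div_pos ha0 (hden _ hi₂I)
    have ht1 : t ≤ 1 := by
      rw [← htdef] at hi₂
      rw [hi₂]
      rw [div_le_one (hden _ hi₂I)]
      linarith
    have htle : ∀ i ∈ Finset.univ.filter (fun i => u i < 0), t ≤ a / (a - u i) := by
      intro i hi
      exact Finset.inf'_le _ hi
    set wz : Fin (n + 1) → ℝ := fun i => a + t * (u i - a) with hwz
    have hsa : ∑ _i : Fin (n + 1), a = 1 := sum_const_inv n
    have hz1 : ∑ i, wz i = 1 := by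
      simp only [hwz, mul_sub]
      rw [Finset.sum_add_distrib, Finset.sum_sub_distrib, ← Finset.mul_sum, ← Finset.mul_sum,
        hsa, h1]
      ring
    have hz0 : ∀ i, 0 ≤ wz i := by
      intro i
      by_cases hui : u i < 0
      · have h2 := htle i (Finset.mem_filter.2 ⟨Finset.mem_univ _, hui⟩)
        have hd := hden i (Finset.mem_filter.2 ⟨Finset.mem_univ _, hui⟩)
        rw [le_div_iff₀ hd] at h2
        simp only [hwz]
        nlinarith
      · push_neg at hui
        simp only [hwz]
        nlinarith
    have hzi₂ : wz i₂ = 0 := by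
      rw [← htdef] at hi₂
      have hd := hden i₂ hi₂I
      simp only [hwz, hi₂]
      field_simp
      ring
    have hzmem : pt σ wz ∈ ⋃ i, convexHull ℝ (σ '' ({i}ᶜ : Set (Fin (n + 1)))) :=
      Set.mem_iUnion.2 ⟨i₂, pt_mem_facet σ hz0 hz1 hzi₂⟩
    have hd1 : dist (pt σ fun _ => a) (pt σ wz) = t * dist (pt σ fun _ => a) (pt σ u) := by
      rw [dist_pt, dist_pt]
      have hsum : (∑ i, ((fun _ => a) i - wz i) • σ i)
          = t • ∑ i, ((fun _ => a) i - u i) • σ i := by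
        rw [Finset.smul_sum]
        refine Finset.sum_congr rfl fun i _ => ?_
        rw [smul_smul]
        congr 1
        simp only [hwz]
        ring
      rw [hsum, norm_smul, Real.norm_eq_abs, abs_of_pos ht0]
    calc r ≤ dist (pt σ fun _ => a) (pt σ wz) := hrle _ hzmem
      _ = t * dist (pt σ fun _ => a) (pt σ u) := hd1
      _ ≤ 1 * dist (pt σ fun _ => a) (pt σ u) :=
          mul_le_mul_of_nonneg_right ht1 dist_nonneg
      _ = dist (pt σ fun _ => a) (pt σ u) := one_mul _

lemma lip' (σ : Fin (n + 1) → E) {r : ℝ}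
    (hrle : ∀ x ∈ ⋃ i, convexHull ℝ (σ '' ({i}ᶜ : Set (Fin (n + 1)))),
      r ≤ dist (pt σ fun _ => ((n : ℝ) + 1)⁻¹) x)
    {u₁ u₂ : Fin (n + 1) → ℝ} (h1 : ∑ i, u₁ i = 1) (h2 : ∑ i, u₂ i = 1) (i : Fin (n + 1)) :
    ((n : ℝ) + 1) * r * |u₁ i - u₂ i| ≤ dist (pt σ u₁) (pt σ u₂) := by
  set a : ℝ := ((n : ℝ) + 1)⁻¹ with ha
  have ha0 : 0 < a := by rw [ha]; positivity
  have hna : ((n : ℝ) + 1) * a = 1 := mul_inv_cancel₀ (by positivity)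
  rcases eq_or_ne (u₁ i) (u₂ i) with h | h
  · rw [h]
    simp [dist_nonneg]
  · have hc : u₁ i - u₂ i ≠ 0 := sub_ne_zero.2 h
    set c : ℝ := u₁ i - u₂ i with hcdef
    set s : ℝ := a / c with hsdef
    set wz : Fin (n + 1) → ℝ := fun k => a + s * (u₂ k - u₁ k) with hwz
    have hsa : ∑ _k : Fin (n + 1), a = 1 := sum_const_inv n
    have hz1 : ∑ k, wz k = 1 := by
      simp only [hwz, mul_sub]
      rw [Finset.sum_add_distrib, Finset.sum_sub_distrib, ← Finset.mul_sum, ← Finset.mul_sum,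
        hsa, h1, h2]
      ring
    have hzi : wz i = 0 := by
      simp only [hwz, hsdef]
      have h3 : u₂ i - u₁ i = -c := by rw [hcdef]; ring
      rw [h3]
      field_simp
      ring
    have hfar := far' σ hrle hz1 (i₀ := i) (le_of_eq hzi)
    have hd1 : dist (pt σ fun _ => a) (pt σ wz) = |s| * dist (pt σ u₂) (pt σ u₁) := by
      rw [dist_pt, dist_pt]
      have hsum : (∑ k, ((fun _ => a) k - wz k) • σ k)
          = (-s) • ∑ k, (u₂ k - u₁ k) • σ k := by
        rw [Finset.smul_sum]
        refine Finset.sum_congr rfl fun k _ => ?_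
        rw [smul_smul]
        congr 1
        simp only [hwz]
        ring
      rw [hsum, norm_smul, Real.norm_eq_abs, abs_neg]
    rw [hd1] at hfar
    have habs : |s| = a / |c| := by
      rw [hsdef, abs_div, abs_of_pos ha0]
    rw [habs, dist_comm (pt σ u₂)] at hfar
    have hcabs : 0 < |c| := abs_pos.2 hc
    rw [div_mul_eq_mul_div, le_div_iff₀ hcabs] at hfar
    have hmul := mul_le_mul_of_nonneg_left hfar (by positivity : (0:ℝ) ≤ (n : ℝ) + 1)
    calc ((n : ℝ) + 1) * r * |u₁ i - u₂ i| = ((n : ℝ) + 1) * (r * |c|) := by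
          rw [hcdef]; ring
      _ ≤ ((n : ℝ) + 1) * (a * dist (pt σ u₁) (pt σ u₂)) := hmul
      _ = dist (pt σ u₁) (pt σ u₂) := by
          rw [← mul_assoc, hna, one_mul]

lemma centroid_mem_facets_of_not_affineIndependent (τ : Fin (n + 1) → E)
    (h : ¬ AffineIndependent ℝ τ) :
    Finset.univ.centroid ℝ τ ∈ ⋃ i, convexHull ℝ (τ '' ({i}ᶜ : Set (Fin (n + 1)))) := by
  rw [affineIndependent_iff] at h
  push_neg at h
  obtain ⟨s, c0, hsum0, hcomb0, e, hes, hce⟩ := h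
  classical
  set c : Fin (n + 1) → ℝ := fun i => if i ∈ s then c0 i else 0 with hcdef
  have hsum : ∑ i, c i = 0 := by
    simp only [hcdef]
    rw [Finset.sum_ite_mem, Finset.univ_inter, hsum0]
  have hcombo : ∑ i, c i • τ i = 0 := by
    simp only [hcdef, ite_smul, zero_smul]
    rw [Finset.sum_ite_mem, Finset.univ_inter, hcomb0]
  have hcne : c e ≠ 0 := by simp only [hcdef, if_pos hes]; exact hce
  obtain ⟨c, hsum, hcombo, ip, hip⟩ :
      ∃ c : Fin (n + 1) → ℝ, (∑ i, c i = 0) ∧ (∑ i, c i • τ i = 0) ∧ ∃ i, 0 < c i := by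
    rcases hcne.lt_or_gt with hneg | hpos
    · refine ⟨-c, by simp [hsum], ?_, e, by simpa using hneg⟩
      simp only [Pi.neg_apply, neg_smul]
      rw [Finset.sum_neg_distrib, hcombo, neg_zero]
    · exact ⟨c, hsum, hcombo, e, hpos⟩
  set a : ℝ := ((n : ℝ) + 1)⁻¹ with ha
  have ha0 : 0 < a := by rw [ha]; positivity
  have hIne : (Finset.univ.filter (fun i => 0 < c i)).Nonempty := ⟨ip, by simp [hip]⟩
  set t : ℝ := (Finset.univ.filter (fun i => 0 < c i)).inf' hIne (fun i => a / c i) with htdef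
  obtain ⟨i₂, hi₂I, hi₂⟩ := Finset.exists_mem_eq_inf' hIne (fun i => a / c i)
  rw [← htdef] at hi₂
  have hci₂ : 0 < c i₂ := (Finset.mem_filter.mp hi₂I).2
  have ht0 : 0 < t := by rw [hi₂]; exact div_pos ha0 hci₂
  set u : Fin (n + 1) → ℝ := fun i => a - t * c i with hu
  have hu0 : ∀ i, 0 ≤ u i := by
    intro i
    by_cases hci : 0 < c i
    · have h2 : t ≤ a / c i := by
        rw [htdef]
        exact Finset.inf'_le _ (Finset.mem_filter.2 ⟨Finset.mem_univ i, hci⟩)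
      rw [le_div_iff₀ hci] at h2
      simp only [hu]
      linarith
    · push_neg at hci
      simp only [hu]
      nlinarith
  have hsa : ∑ _i : Fin (n + 1), a = 1 := sum_const_inv n
  have hu1 : ∑ i, u i = 1 := by
    simp only [hu]
    rw [Finset.sum_sub_distrib, ← Finset.mul_sum, hsa, hsum]
    ring
  have hui₂ : u i₂ = 0 := by
    simp only [hu, hi₂]
    field_simp
    ring
  have hpt : pt τ u = Finset.univ.centroid ℝ τ := by
    rw [centroid_eq_pt]
    simp only [pt, hu, sub_smul]
    rw [Finset.sum_sub_distrib]
    have hz : ∑ i, (t * c i) • τ i = 0 := by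
      simp only [mul_smul]
      rw [← Finset.smul_sum, hcombo, smul_zero]
    rw [hz, sub_zero]
  exact Set.mem_iUnion.2 ⟨i₂, hpt ▸ pt_mem_facet τ hu0 hu1 hui₂⟩

end BarySubAux

set_option maxHeartbeats 3200000 in
/-- Every simplex of the first barycentric subdivision of a thick simplex is
thick, with a thickness bound depending only on the dimension and the original
thickness bound. -/
theorem barycentric_subdivision_thick :
    ∀ n : ℕ, 1 ≤ n → ∀ φ₀ : ℝ, 0 < φ₀ → ∃ φ₁ : ℝ, 0 < φ₁ ∧
      ∀ (N : ℕ) (σ : Fin (n + 1) → EuclideanSpace ℝ (Fin N)),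
        AffineIndependent ℝ σ → φ₀ ≤ simplexThickness σ →
        ∀ S : Fin (n + 1) → Finset (Fin (n + 1)),
          (∀ j, (S j).Nonempty) →
          (∀ j k : Fin (n + 1), j < k → S j ⊂ S k) →
          S (Fin.last n) = Finset.univ →
          AffineIndependent ℝ (fun j => (S j).centroid ℝ σ) ∧
            φ₁ ≤ simplexThickness (fun j => (S j).centroid ℝ σ) := by
  intro n hn φ₀ hφ₀
  refine ⟨φ₀ / (2 * ((n : ℝ) + 1)), by positivity, ?_⟩
  intro N σ hind hthick S hSne hSchain hSlast
  classical
  set w : Fin (n + 1) → EuclideanSpace ℝ (Fin N) := fun j => (S j).centroid ℝ σ with hwdef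
  have ha0 : (0:ℝ) < ((n : ℝ) + 1)⁻¹ := by positivity
  have hnne : ((n : ℝ) + 1) ≠ 0 := by positivity
  have hna : ((n : ℝ) + 1) * ((n : ℝ) + 1)⁻¹ = 1 := mul_inv_cancel₀ hnne
  set d : ℝ := Metric.diam (convexHull ℝ (Set.range σ)) with hd
  set r : ℝ := Metric.infDist (Finset.univ.centroid ℝ σ)
    (⋃ i, convexHull ℝ (σ '' ({i}ᶜ : Set (Fin (n + 1))))) with hrdef
  have hthick' : φ₀ ≤ r / d := hthick
  have hd0 : 0 ≤ d := Metric.diam_nonneg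
  have hdpos : 0 < d := by
    rcases hd0.lt_or_eq with h | h
    · exact h
    · exfalso
      rw [← h, div_zero] at hthick'
      linarith
  have hrd : φ₀ * d ≤ r := (le_div_iff₀ hdpos).mp hthick'
  have hrpos : 0 < r := lt_of_lt_of_le (by positivity) hrd
  have hr0 : 0 ≤ r := hrpos.le
  have hrle : ∀ x ∈ ⋃ i, convexHull ℝ (σ '' ({i}ᶜ : Set (Fin (n + 1)))),
      r ≤ dist (BarySubAux.pt σ fun _ => ((n : ℝ) + 1)⁻¹) x := by
    intro x hx
    rw [← BarySubAux.centroid_eq_pt σ, hrdef]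
    exact Metric.infDist_le_dist_of_mem hx
  -- chain combinatorics
  have hmono : ∀ j k : Fin (n + 1), j ≤ k → S j ⊆ S k := by
    intro j k h
    rcases h.lt_or_eq with h' | h'
    · exact (hSchain j k h').subset
    · rw [h']
  have hcard : ∀ j, 0 < (S j).card := fun j => Finset.card_pos.2 (hSne j)
  have hcardle : ∀ j, (S j).card ≤ n + 1 := by
    intro j
    calc (S j).card ≤ (Finset.univ : Finset (Fin (n + 1))).card := Finset.card_le_univ _
      _ = n + 1 := by simp
  have hex : ∀ j : Fin (n + 1), ∃ i, ∀ k, i ∈ S k ↔ j ≤ k := by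
    intro j
    by_cases hj : (j : ℕ) = 0
    · obtain ⟨i, hi⟩ := hSne j
      refine ⟨i, fun k => ⟨fun _ => ?_, fun hk => hmono j k hk hi⟩⟩
      rw [Fin.le_def]
      omega
    · have hjj : (⟨(j : ℕ) - 1, by omega⟩ : Fin (n + 1)) < j := by
        rw [Fin.lt_def]
        show (j : ℕ) - 1 < (j : ℕ)
        omega
      obtain ⟨i, hiS, hiN⟩ := Finset.exists_of_ssubset (hSchain _ j hjj)
      refine ⟨i, fun k => ⟨fun hik => ?_, fun hk => hmono j k hk hiS⟩⟩
      by_contra hjk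
      push_neg at hjk
      rw [Fin.lt_def] at hjk
      refine hiN (hmono k _ ?_ hik)
      rw [Fin.le_def]
      show (k : ℕ) ≤ (j : ℕ) - 1
      omega
  choose ii hii using hex
  -- weights
  set v : Fin (n + 1) → Fin (n + 1) → ℝ :=
    fun k i => if i ∈ S k then ((S k).card : ℝ)⁻¹ else 0 with hv
  have hv1 : ∀ k, ∑ i, v k i = 1 := by
    intro k
    simp only [hv]
    rw [Finset.sum_ite_mem, Finset.univ_inter, Finset.sum_const, nsmul_eq_mul]
    exact mul_inv_cancel₀ (Nat.cast_ne_zero.2 (hcard k).ne')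
  have hv0 : ∀ k i, 0 ≤ v k i := by
    intro k i
    simp only [hv]
    split
    · positivity
    · exact le_rfl
  have hwpt : ∀ k, w k = BarySubAux.pt σ (v k) :=
    fun k => BarySubAux.centroid_finset_eq_pt σ (S k) (hSne k)
  have hvii : ∀ l m : Fin (n + 1), v m (ii l) = if l ≤ m then ((S m).card : ℝ)⁻¹ else 0 := by
    intro l m
    simp only [hv]
    by_cases h : l ≤ m
    · rw [if_pos ((hii l m).mpr h), if_pos h]
    · rw [if_neg (fun hmem => h ((hii l m).mp hmem)), if_neg h]
  set ub : Fin (n + 1) → ℝ := fun i => ∑ k, ((n : ℝ) + 1)⁻¹ * v k i with hub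
  have hub1 : ∑ i, ub i = 1 := by
    simp only [hub]
    rw [Finset.sum_comm]
    have hstep : ∀ k ∈ Finset.univ, ∑ i, ((n : ℝ) + 1)⁻¹ * v k i = ((n : ℝ) + 1)⁻¹ := by
      intro k _
      rw [← Finset.mul_sum, hv1 k, mul_one]
    rw [Finset.sum_congr rfl hstep]
    exact BarySubAux.sum_const_inv n
  have hbw : Finset.univ.centroid ℝ w = BarySubAux.pt σ ub := by
    rw [BarySubAux.centroid_eq_pt]
    calc BarySubAux.pt w (fun _ => ((n : ℝ) + 1)⁻¹)
        = ∑ j, ((n : ℝ) + 1)⁻¹ • BarySubAux.pt σ (v j) := by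
          simp only [BarySubAux.pt]
          exact Finset.sum_congr rfl fun j _ => by rw [hwpt j, BarySubAux.pt]
      _ = ∑ j, ∑ i, (((n : ℝ) + 1)⁻¹ * v j i) • σ i := by
          refine Finset.sum_congr rfl fun j _ => ?_
          rw [BarySubAux.pt, Finset.smul_sum]
          exact Finset.sum_congr rfl fun i _ => by rw [smul_smul]
      _ = ∑ i, ∑ j, (((n : ℝ) + 1)⁻¹ * v j i) • σ i := Finset.sum_comm
      _ = BarySubAux.pt σ ub := by
          rw [BarySubAux.pt]
          exact Finset.sum_congr rfl fun i _ => by rw [← Finset.sum_smul]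
  -- the facet estimate
  have hfacet : ∀ j : Fin (n + 1), ∀ y ∈ convexHull ℝ (w '' ({j}ᶜ : Set (Fin (n + 1)))),
      r * ((n : ℝ) + 1)⁻¹ / 2 ≤ dist (Finset.univ.centroid ℝ w) y := by
    intro j
    have hinv : ((n : ℝ) + 1)⁻¹ ≤ ((S j).card : ℝ)⁻¹ := by
      apply inv_anti₀
      · exact_mod_cast hcard j
      · exact_mod_cast hcardle j
    have hrep : ∀ G : (Fin (n + 1) → ℝ) → ℝ,
        (∀ θ₁ θ₂ : ℝ, ∀ u₁ u₂ : Fin (n + 1) → ℝ,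
          G (fun i => θ₁ * u₁ i + θ₂ * u₂ i) = θ₁ * G u₁ + θ₂ * G u₂) →
        (∀ k, k ≠ j → G (v k) = 0) →
        ∀ y ∈ convexHull ℝ (w '' ({j}ᶜ : Set (Fin (n + 1)))),
          ∃ uy : Fin (n + 1) → ℝ, (∑ i, uy i = 1) ∧ y = BarySubAux.pt σ uy ∧ G uy = 0 := by
      intro G hGlin hGv y hy
      have hsub : convexHull ℝ (w '' ({j}ᶜ : Set (Fin (n + 1)))) ⊆
          {x : EuclideanSpace ℝ (Fin N) |
            ∃ uy : Fin (n + 1) → ℝ, (∑ i, uy i = 1) ∧ x = BarySubAux.pt σ uy ∧ G uy = 0} := by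
        refine convexHull_min ?_ ?_
        · rintro x ⟨k, hk, rfl⟩
          exact ⟨v k, hv1 k, hwpt k, hGv k (by simpa using hk)⟩
        intro x hx y' hy' θ₁ θ₂ hθ₁ hθ₂ hθ
        obtain ⟨u₁, hu₁, rfl, hg₁⟩ := hx
        obtain ⟨u₂, hu₂, rfl, hg₂⟩ := hy'
        refine ⟨fun i => θ₁ * u₁ i + θ₂ * u₂ i, ?_, ?_, by rw [hGlin, hg₁, hg₂]; ring⟩
        · rw [Finset.sum_add_distrib, ← Finset.mul_sum, ← Finset.mul_sum, hu₁, hu₂,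
            mul_one, mul_one]
          exact hθ
        · simp only [BarySubAux.pt, Finset.smul_sum, smul_smul]
          rw [← Finset.sum_add_distrib]
          exact Finset.sum_congr rfl fun i _ => (add_smul _ _ _).symm
      exact hsub hy
    intro y hy
    rcases Nat.lt_or_ge (j : ℕ) n with hjn | hjn
    -- case j < n
    · obtain ⟨j', hj'⟩ : ∃ j' : Fin (n + 1), (j' : ℕ) = (j : ℕ) + 1 :=
        ⟨⟨(j : ℕ) + 1, by omega⟩, rfl⟩
      have hGv : ∀ k, k ≠ j → v k (ii j) - v k (ii j') = 0 := by
        intro k hk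
        rcases le_or_gt j k with hle | hlt
        · have hjk : j < k := lt_of_le_of_ne hle (Ne.symm hk)
          rw [Fin.lt_def] at hjk
          have hj'k : j' ≤ k := by rw [Fin.le_def]; omega
          rw [hvii j k, hvii j' k, if_pos hle, if_pos hj'k, sub_self]
        · have h1 : ¬ j ≤ k := not_le.2 hlt
          rw [Fin.lt_def] at hlt
          have h2 : ¬ j' ≤ k := by rw [Fin.le_def]; omega
          rw [hvii j k, hvii j' k, if_neg h1, if_neg h2, sub_self]
      obtain ⟨uy, huy1, hyeq, hGy⟩ :=
        hrep (fun u => u (ii j) - u (ii j')) (fun θ₁ θ₂ u₁ u₂ => by ring) hGv y hy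
      have hj'j : ¬ j' ≤ j := by rw [Fin.le_def]; omega
      have hGub : ub (ii j) - ub (ii j') = ((n : ℝ) + 1)⁻¹ * ((S j).card : ℝ)⁻¹ := by
        have hstep : ub (ii j) - ub (ii j')
            = ∑ k, ((n : ℝ) + 1)⁻¹ * (v k (ii j) - v k (ii j')) := by
          simp only [hub]
          rw [← Finset.sum_sub_distrib]
          exact Finset.sum_congr rfl fun k _ => by ring
        rw [hstep, Finset.sum_eq_single j (fun k _ hk => by rw [hGv k hk, mul_zero]) (by simp),
          hvii j j, hvii j' j, if_pos le_rfl, if_neg hj'j]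
        ring
      obtain ⟨i, hi⟩ : ∃ i, ((n : ℝ) + 1)⁻¹ * ((n : ℝ) + 1)⁻¹ / 2 ≤ |ub i - uy i| := by
        have hge : ((n : ℝ) + 1)⁻¹ * ((n : ℝ) + 1)⁻¹
            ≤ (ub (ii j) - uy (ii j)) - (ub (ii j') - uy (ii j')) := by
          have h3 : ((n : ℝ) + 1)⁻¹ * ((n : ℝ) + 1)⁻¹ ≤ ub (ii j) - ub (ii j') := by
            rw [hGub]
            exact mul_le_mul_of_nonneg_left hinv ha0.le
          have h4 : uy (ii j) - uy (ii j') = 0 := hGy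
          linarith
        by_cases hcase : ((n : ℝ) + 1)⁻¹ * ((n : ℝ) + 1)⁻¹ / 2 ≤ |ub (ii j) - uy (ii j)|
        · exact ⟨ii j, hcase⟩
        · push_neg at hcase
          exact ⟨ii j', by
            have h5 := le_abs_self (ub (ii j) - uy (ii j))
            have h6 := neg_le_abs (ub (ii j') - uy (ii j'))
            linarith⟩
      have hlip := BarySubAux.lip' σ hrle hub1 huy1 i
      rw [hyeq, hbw]
      calc r * ((n : ℝ) + 1)⁻¹ / 2
          = ((n : ℝ) + 1) * r * (((n : ℝ) + 1)⁻¹ * ((n : ℝ) + 1)⁻¹ / 2) := by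
            field_simp
        _ ≤ ((n : ℝ) + 1) * r * |ub i - uy i| :=
            mul_le_mul_of_nonneg_left hi (mul_nonneg (by positivity) hr0)
        _ ≤ dist (BarySubAux.pt σ ub) (BarySubAux.pt σ uy) := hlip
    -- case j = n
    · have hjval : (j : ℕ) = n := le_antisymm j.is_le hjn
      have hGv : ∀ k, k ≠ j → v k (ii j) = 0 := by
        intro k hk
        rw [hvii j k, if_neg ?_]
        intro hle
        refine hk (le_antisymm ?_ hle)
        rw [Fin.le_def]
        have := k.is_le
        omega
      obtain ⟨uy, huy1, hyeq, hGy⟩ :=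
        hrep (fun u => u (ii j)) (fun θ₁ θ₂ u₁ u₂ => rfl) hGv y hy
      have hGub : ub (ii j) = ((n : ℝ) + 1)⁻¹ * ((S j).card : ℝ)⁻¹ := by
        simp only [hub]
        rw [Finset.sum_eq_single j (fun k _ hk => by rw [hGv k hk, mul_zero]) (by simp),
          hvii j j, if_pos le_rfl]
      obtain ⟨i, hi⟩ : ∃ i, ((n : ℝ) + 1)⁻¹ * ((n : ℝ) + 1)⁻¹ / 2 ≤ |ub i - uy i| := by
        refine ⟨ii j, ?_⟩
        rw [hGy, sub_zero]
        have h3 : ((n : ℝ) + 1)⁻¹ * ((n : ℝ) + 1)⁻¹ ≤ ub (ii j) := by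
          rw [hGub]
          exact mul_le_mul_of_nonneg_left hinv ha0.le
        have h5 := le_abs_self (ub (ii j))
        nlinarith
      have hlip := BarySubAux.lip' σ hrle hub1 huy1 i
      rw [hyeq, hbw]
      calc r * ((n : ℝ) + 1)⁻¹ / 2
          = ((n : ℝ) + 1) * r * (((n : ℝ) + 1)⁻¹ * ((n : ℝ) + 1)⁻¹ / 2) := by
            field_simp
        _ ≤ ((n : ℝ) + 1) * r * |ub i - uy i| :=
            mul_le_mul_of_nonneg_left hi (mul_nonneg (by positivity) hr0)
        _ ≤ dist (BarySubAux.pt σ ub) (BarySubAux.pt σ uy) := hlip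
  -- assembly
  have hj0lt : 0 < n + 1 := by omega
  have hj1lt : 1 < n + 1 := by omega
  set j0 : Fin (n + 1) := ⟨0, hj0lt⟩ with hj0
  set j1 : Fin (n + 1) := ⟨1, hj1lt⟩ with hj1
  have hne01 : j1 ≠ j0 := by
    simp [hj0, hj1, Fin.ext_iff]
  have hw1mem : w j1 ∈ convexHull ℝ (w '' ({j0}ᶜ : Set (Fin (n + 1)))) :=
    subset_convexHull ℝ _ ⟨j1, hne01, rfl⟩
  have hUb : ∀ y ∈ ⋃ i, convexHull ℝ (w '' ({i}ᶜ : Set (Fin (n + 1)))),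
      r * ((n : ℝ) + 1)⁻¹ / 2 ≤ dist (Finset.univ.centroid ℝ w) y := by
    intro y hy
    obtain ⟨j, hj⟩ := Set.mem_iUnion.mp hy
    exact hfacet j y hj
  have hcpos : 0 < r * ((n : ℝ) + 1)⁻¹ / 2 := by positivity
  have hindw : AffineIndependent ℝ w := by
    by_contra hcon
    have hmem := BarySubAux.centroid_mem_facets_of_not_affineIndependent w hcon
    have hco := hUb _ hmem
    rw [dist_self] at hco
    linarith
  refine ⟨hindw, ?_⟩
  have hbwmem : Finset.univ.centroid ℝ w ∈ convexHull ℝ (Set.range w) := by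
    rw [BarySubAux.centroid_eq_pt]
    exact BarySubAux.pt_mem_convexHull w (fun i => ha0.le) (BarySubAux.sum_const_inv n)
  have hwrange : Set.range w ⊆ convexHull ℝ (Set.range σ) := by
    rintro x ⟨k, rfl⟩
    rw [hwpt k]
    exact BarySubAux.pt_mem_convexHull σ (hv0 k) (hv1 k)
  have hsub : convexHull ℝ (Set.range w) ⊆ convexHull ℝ (Set.range σ) :=
    convexHull_min hwrange (convex_convexHull ℝ _)
  have hbnd : Bornology.IsBounded (convexHull ℝ (Set.range σ)) :=
    isBounded_convexHull.2 (Set.finite_range σ).isBounded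
  have hwbnd : Bornology.IsBounded (convexHull ℝ (Set.range w)) :=
    isBounded_convexHull.2 (Set.finite_range w).isBounded
  have hdw_le : Metric.diam (convexHull ℝ (Set.range w)) ≤ d := by
    rw [hd]
    exact Metric.diam_mono hsub hbnd
  have hdw_pos : 0 < Metric.diam (convexHull ℝ (Set.range w)) := by
    have h1 := hUb _ (Set.mem_iUnion.2 ⟨j0, hw1mem⟩)
    have h2 : dist (Finset.univ.centroid ℝ w) (w j1)
        ≤ Metric.diam (convexHull ℝ (Set.range w)) :=
      Metric.dist_le_diam_of_mem hwbnd hbwmem (subset_convexHull ℝ _ ⟨j1, rfl⟩)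
    linarith
  have hnum : r * ((n : ℝ) + 1)⁻¹ / 2 ≤ Metric.infDist (Finset.univ.centroid ℝ w)
      (⋃ i, convexHull ℝ (w '' ({i}ᶜ : Set (Fin (n + 1))))) := by
    rw [Metric.infDist_eq_iInf]
    have hne : Nonempty ↥(⋃ i, convexHull ℝ (w '' ({i}ᶜ : Set (Fin (n + 1))))) :=
      ⟨⟨w j1, Set.mem_iUnion.2 ⟨j0, hw1mem⟩⟩⟩
    exact le_ciInf fun y => hUb y y.2
  show φ₀ / (2 * ((n : ℝ) + 1)) ≤ simplexThickness w
  unfold simplexThickness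
  calc φ₀ / (2 * ((n : ℝ) + 1)) = φ₀ * d * ((n : ℝ) + 1)⁻¹ / 2 / d := by
        field_simp
    _ ≤ r * ((n : ℝ) + 1)⁻¹ / 2 / d := by
        apply (div_le_div_iff_of_pos_right hdpos).2
        nlinarith
    _ ≤ r * ((n : ℝ) + 1)⁻¹ / 2 / Metric.diam (convexHull ℝ (Set.range w)) :=
        div_le_div_of_nonneg_left hcpos.le hdw_pos hdw_le
    _ ≤ Metric.infDist (Finset.univ.centroid ℝ w)
          (⋃ i, convexHull ℝ (w '' ({i}ᶜ : Set (Fin (n + 1)))))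
          / Metric.diam (convexHull ℝ (Set.range w)) :=
        (div_le_div_iff_of_pos_right hdw_pos).2 hnum
end

section
/- Let V be a real inner product space of finite dimension 3 (for instance EuclideanSpace ℝ (Fin 3)) and let v₀, v₁, v₂, v₃ be nonzero vectors in V. Then the 4×4 real matrix whose (i,j) entry is cos (angle (v_i) (v_j)) has determinant zero. In particular, for four points lying on the sphere of radius R = 1/√κ centered at the origin in ℝ³, with pairwise geodesic distances d_ij (so that √κ·d_ij is the angle between the corresponding position vectors), one has det(cos(√κ·d_ij)) = 0. -/
open InnerProductGeometry RealInnerProductSpace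

/-- For four nonzero vectors in a 3-dimensional real inner product space, the
4×4 matrix of cosines of their pairwise angles has determinant zero. In
particular, for four points on the sphere of radius `1/√κ` in `ℝ³` with
pairwise geodesic distances `d i j` (so that `√κ · d i j` is the angle between
the position vectors), one has `det (cos (√κ · d i j)) = 0`. -/
theorem det_cos_angle_eq_zero {V : Type*} [NormedAddCommGroup V]
    [InnerProductSpace ℝ V] (hdim : Module.finrank ℝ V = 3)
    (v : Fin 4 → V) (hv : ∀ i, v i ≠ 0) :
    (Matrix.of fun i j : Fin 4 => Real.cos (angle (v i) (v j))).det = 0 := by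
  have hfd : FiniteDimensional ℝ V := Module.finite_of_finrank_eq_succ hdim
  set u : Fin 4 → V := fun i => ‖v i‖⁻¹ • v i with hu
  have hcos : ∀ i j, Real.cos (angle (v i) (v j)) = ⟪u i, u j⟫ := by
    intro i j
    rw [InnerProductGeometry.cos_angle]
    have hi : ‖v i‖ ≠ 0 := norm_ne_zero_iff.mpr (hv i)
    have hj : ‖v j‖ ≠ 0 := norm_ne_zero_iff.mpr (hv j)
    simp only [hu, real_inner_smul_left, real_inner_smul_right]
    rw [div_eq_mul_inv, mul_inv]
    ring
  have hnotli : ¬ LinearIndependent ℝ u := by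
    intro h
    have := h.fintype_card_le_finrank
    rw [hdim] at this
    simp at this
  obtain ⟨g, hg, i₀, hgi⟩ := Fintype.not_linearIndependent_iff.mp hnotli
  rw [← Matrix.exists_mulVec_eq_zero_iff]
  refine ⟨g, fun h => hgi (congrFun h i₀), ?_⟩
  ext i
  simp only [Matrix.mulVec, dotProduct, Matrix.of_apply, hcos, Pi.zero_apply]
  calc ∑ j, ⟪u i, u j⟫ * g j = ⟪u i, ∑ j, g j • u j⟫ := by
        rw [inner_sum]
        simp [real_inner_smul_right, mul_comm]
    _ = 0 := by rw [hg, inner_zero_right]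
end

section
/- Let z₀, z₁, z₂, z₃ be four points of the hyperbolic upper half-plane (Mathlib's UpperHalfPlane with its hyperbolic distance of constant curvature −1). Then the 4×4 real matrix whose (i,j) entry is cosh (dist z_i z_j) has determinant zero. (This is the necessity of the vanishing-determinant condition det(cosh(√(−κ)·d_ij)) = 0 for a metric quadruple isometrically embedded in the hyperbolic plane of curvature κ = −1.) -/
/-- For any four points of the hyperbolic upper half-plane (with its metric of
constant curvature `−1`), the 4×4 matrix with entries `cosh (dist z_i z_j)`
has determinant zero. -/
theorem det_cosh_dist_eq_zero (z : Fin 4 → UpperHalfPlane) :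
    (Matrix.of fun i j : Fin 4 => Real.cosh (dist (z i) (z j))).det = 0 := by
  set r : Fin 4 → ℝ := fun i => (z i).re with hr
  set t : Fin 4 → ℝ := fun i => (z i).im with htdef
  have ht : ∀ i, t i ≠ 0 := fun i => ((z i).im_pos).ne'
  set M : Matrix (Fin 4) (Fin 4) ℝ :=
    Matrix.of fun i j : Fin 4 => Real.cosh (dist (z i) (z j)) with hM
  set D : Matrix (Fin 4) (Fin 4) ℝ := Matrix.diagonal t with hD
  set A : Matrix (Fin 4) (Fin 3) ℝ :=
    Matrix.of fun i k => ![(r i ^ 2 + t i ^ 2) / 2, 1, r i] k with hA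
  set B : Matrix (Fin 3) (Fin 4) ℝ :=
    Matrix.of fun k j => ![(1 : ℝ), (r j ^ 2 + t j ^ 2) / 2, -r j] k with hB
  have hfac : D * M * D = A * B := by
    ext i j
    have hc : Real.cosh (dist (z i) (z j)) =
        1 + ((r i - r j) ^ 2 + (t i - t j) ^ 2) / (2 * t i * t j) := by
      rw [UpperHalfPlane.cosh_dist, Complex.dist_eq, Complex.sq_norm, Complex.normSq_apply,
        Complex.sub_re, Complex.sub_im]
      simp only [UpperHalfPlane.coe_im, UpperHalfPlane.coe_re, hr, htdef]
      ring
    have hij : (D * M * D) i j = t i * Real.cosh (dist (z i) (z j)) * t j := by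
      simp [hD, hM, Matrix.diagonal_mul, Matrix.mul_diagonal]
    rw [hij, hc]
    simp only [hA, hB, Matrix.mul_apply, Fin.sum_univ_three, Matrix.of_apply,
      Matrix.cons_val_zero, Matrix.cons_val_one, Matrix.head_cons]
    show t i * _ * t j = (r i ^ 2 + t i ^ 2) / 2 * 1 + 1 * ((r j ^ 2 + t j ^ 2) / 2) +
      r i * (-r j)
    field_simp [ht i, ht j]
    ring
  have hrank : (A * B).rank ≤ 3 := by
    refine le_trans (Matrix.rank_mul_le_right A B) ?_
    simpa using B.rank_le_card_height
  by_contra hdet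
  have hprod : ∏ i, t i ≠ 0 := Finset.prod_ne_zero_iff.2 fun i _ => ht i
  have hDM : (D * M * D).det ≠ 0 := by
    rw [Matrix.det_mul, Matrix.det_mul, hD, Matrix.det_diagonal]
    exact mul_ne_zero (mul_ne_zero hprod hdet) hprod
  have hunit : IsUnit (A * B) := by
    rw [← hfac]
    exact (Matrix.isUnit_iff_isUnit_det _).2 (isUnit_iff_ne_zero.2 hDM)
  have h4 : (A * B).rank = 4 := by
    simpa using Matrix.rank_of_isUnit _ hunit
  omega
end
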